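/- Quadratic lower bound for interpolated policies (Eq. (A.5)): Let π̃ and π be policies of a finite MDP and ζ ∈ [0,1], and define the interpolated policy π'(s,a) = ζ·π̃(s,a) + (1−ζ)·π(s,a). Then J^{π'} − J^{π} ≥ ζ·A^{π̃}_{π,d^π} − (γ·ζ²/(2(1−γ)²)) · δ(π̃,π) · ΔA^{π̃}_π. -/

import Mathlib

open Finset

/-- A finite Markov decision process with bounded rewards and discount `γ ∈ (0,1)`. -/
structure FiniteMDP (S A : Type) [Fintype S] [Fintype A] : Type where
  P : S → A → S → ℝ
  r : S → A → ℝ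
  γ : ℝ
  s0 : S
  P_nonneg : ∀ s a s', 0 ≤ P s a s'
  P_sum_one : ∀ s a, ∑ s', P s a s' = 1
  r_bound : ∀ s a, |r s a| ≤ 1
  γ_pos : 0 < γ
  γ_lt_one : γ < 1

variable {S A : Type} [Fintype S] [Fintype A] [DecidableEq S]

/-- `π` is a (stochastic) policy. -/
def IsPolicy (π : S → A → ℝ) : Prop :=
  (∀ s a, 0 ≤ π s a) ∧ ∀ s, ∑ a, π s a = 1

/-- `Q` satisfies the Bellman equation of policy `π`. -/
def IsQ (M : FiniteMDP S A) (π Q : S → A → ℝ) : Prop :=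
  ∀ s a, Q s a = M.r s a + M.γ * ∑ s', M.P s a s' * ∑ a', π s' a' * Q s' a'

/-- `d` is the discounted state (occupancy) distribution of policy `π`. -/
def IsD (M : FiniteMDP S A) (π : S → A → ℝ) (d : S → ℝ) : Prop :=
  ∀ s', d s' = (1 - M.γ) * (if s' = M.s0 then (1 : ℝ) else 0)
      + M.γ * ∑ s, d s * ∑ a, π s a * M.P s a s'

/-- The normalized return `J^π = ∑_s d^π(s) ∑_a π(s,a) r(s,a)`. -/
def Jret (M : FiniteMDP S A) (π : S → A → ℝ) (d : S → ℝ) : ℝ :=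
  ∑ s, d s * ∑ a, π s a * M.r s a

/-- The policy advantage function `A^{π'}_π(s) = ∑_a (π'(s,a) − π(s,a)) Q_π(s,a)`. -/
def polAdv (π' π Q : S → A → ℝ) (s : S) : ℝ :=
  ∑ a, (π' s a - π s a) * Q s a

/-- The expected policy advantage `A^{π'}_{π,d}`. -/
def expPolAdv (π' π Q : S → A → ℝ) (d : S → ℝ) : ℝ :=
  ∑ s, d s * polAdv π' π Q s

/-- `δ(π',π) = max_s ∑_a |π'(s,a) − π(s,a)|`. -/
noncomputable def polDist (π' π : S → A → ℝ) : ℝ :=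
  ⨆ s : S, ∑ a, |π' s a - π s a|

/-- `ΔA^{π'}_π = max_{s,s'} |A^{π'}_π(s) − A^{π'}_π(s')|`. -/
noncomputable def advRange (π' π Q : S → A → ℝ) : ℝ :=
  ⨆ p : S × S, |polAdv π' π Q p.1 - polAdv π' π Q p.2|

/-- Kullback–Leibler divergence between probability vectors on a finite set. -/
noncomputable def KLdiv {B : Type} [Fintype B] (p q : B → ℝ) : ℝ :=
  ∑ a ∈ Finset.univ.filter (fun a => 0 < p a), p a * Real.log (p a / q a)

set_option linter.unusedSectionVars false

-- kernel of a policy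
def kern (M : FiniteMDP S A) (ρ : S → A → ℝ) (s s' : S) : ℝ :=
  ∑ a, ρ s a * M.P s a s'

lemma kern_nonneg (M : FiniteMDP S A) {ρ : S → A → ℝ} (hρ : ∀ s a, 0 ≤ ρ s a) (s s' : S) :
    0 ≤ kern M ρ s s' :=
  Finset.sum_nonneg fun a _ => mul_nonneg (hρ s a) (M.P_nonneg s a s')

lemma kern_sum (M : FiniteMDP S A) {ρ : S → A → ℝ} (hρ : ∀ s, ∑ a, ρ s a = 1) (s : S) :
    ∑ s', kern M ρ s s' = 1 := by
  unfold kern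
  rw [Finset.sum_comm]
  have : ∀ a ∈ Finset.univ, ∑ s', ρ s a * M.P s a s' = ρ s a := by
    intro a _
    rw [← Finset.mul_sum, M.P_sum_one, mul_one]
  rw [Finset.sum_congr rfl this, hρ]

lemma isD_kern (M : FiniteMDP S A) {ρ : S → A → ℝ} {d : S → ℝ} (hd : IsD M ρ d) (s' : S) :
    d s' = (1 - M.γ) * (if s' = M.s0 then (1 : ℝ) else 0) + M.γ * ∑ s, d s * kern M ρ s s' :=
  hd s'

lemma d_sum_one (M : FiniteMDP S A) {ρ : S → A → ℝ} (hρ : ∀ s, ∑ a, ρ s a = 1)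
    {d : S → ℝ} (hd : IsD M ρ d) : ∑ s, d s = 1 := by
  have key : ∑ s', d s' = (1 - M.γ) + M.γ * ∑ s', d s' := by
    calc ∑ s', d s'
        = ∑ s', ((1 - M.γ) * (if s' = M.s0 then (1 : ℝ) else 0)
            + M.γ * ∑ s, d s * kern M ρ s s') :=
          Finset.sum_congr rfl fun s' _ => isD_kern M hd s'
      _ = (1 - M.γ) * ∑ s', (if s' = M.s0 then (1 : ℝ) else 0)
            + M.γ * ∑ s', ∑ s, d s * kern M ρ s s' := by
          rw [Finset.sum_add_distrib, ← Finset.mul_sum, ← Finset.mul_sum]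
      _ = (1 - M.γ) + M.γ * ∑ s', d s' := by
          rw [Finset.sum_ite_eq' Finset.univ M.s0 (fun _ => (1:ℝ))]
          simp only [Finset.mem_univ, if_true, mul_one]
          congr 1
          rw [Finset.sum_comm]
          congr 1
          refine Finset.sum_congr rfl fun s _ => ?_
          rw [← Finset.mul_sum, kern_sum M hρ, mul_one]
  have h1 : (1 - M.γ) * (∑ s, d s - 1) = 0 := by linarith
  have h2 : (1 : ℝ) - M.γ ≠ 0 := by have := M.γ_lt_one; linarith
  have := mul_eq_zero.mp h1
  rcases this with h | h
  · exact absurd h h2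
  · linarith

lemma d_abs_sum_le_one (M : FiniteMDP S A) {ρ : S → A → ℝ} (hρ : IsPolicy ρ)
    {d : S → ℝ} (hd : IsD M ρ d) : ∑ s, |d s| ≤ 1 := by
  have key : ∑ s', |d s'| ≤ (1 - M.γ) + M.γ * ∑ s', |d s'| := by
    have step : ∀ s' : S, |d s'| ≤ (1 - M.γ) * (if s' = M.s0 then (1 : ℝ) else 0)
        + M.γ * ∑ s, |d s| * kern M ρ s s' := by
      intro s'
      rw [isD_kern M hd s']
      refine (abs_add_le _ _).trans (add_le_add ?_ ?_)
      · rw [abs_mul]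
        have h1 : |1 - M.γ| = 1 - M.γ := abs_of_nonneg (by have := M.γ_lt_one; linarith)
        rw [h1]
        by_cases h : s' = M.s0 <;> simp [h]
      · rw [abs_mul, abs_of_nonneg M.γ_pos.le]
        refine mul_le_mul_of_nonneg_left ?_ M.γ_pos.le
        refine (Finset.abs_sum_le_sum_abs _ _).trans ?_
        refine Finset.sum_le_sum fun s _ => ?_
        rw [abs_mul, abs_of_nonneg (kern_nonneg M hρ.1 s s')]
    calc ∑ s', |d s'|
        ≤ ∑ s', ((1 - M.γ) * (if s' = M.s0 then (1 : ℝ) else 0)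
            + M.γ * ∑ s, |d s| * kern M ρ s s') := Finset.sum_le_sum fun s' _ => step s'
      _ = (1 - M.γ) + M.γ * ∑ s', |d s'| := by
          rw [Finset.sum_add_distrib, ← Finset.mul_sum, ← Finset.mul_sum]
          rw [Finset.sum_ite_eq' Finset.univ M.s0 (fun _ => (1:ℝ))]
          simp only [Finset.mem_univ, if_true, mul_one]
          congr 1
          rw [Finset.sum_comm]
          congr 1
          refine Finset.sum_congr rfl fun s _ => ?_
          rw [← Finset.mul_sum, kern_sum M hρ.2, mul_one]
  nlinarith [M.γ_lt_one, M.γ_pos]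

lemma e_abs_sum_le (M : FiniteMDP S A) {ρ' ρ : S → A → ℝ} (hρ' : IsPolicy ρ') (hρ : IsPolicy ρ)
    {d' d : S → ℝ} (hd' : IsD M ρ' d') (hd : IsD M ρ d) (B : ℝ) (hB0 : 0 ≤ B)
    (hB : ∀ s, ∑ a, |ρ' s a - ρ s a| ≤ B) :
    ∑ s, |d' s - d s| ≤ M.γ * B / (1 - M.γ) := by
  have hγ1 : (0:ℝ) < 1 - M.γ := by linarith [M.γ_lt_one]
  have step : ∀ s', |d' s' - d s'| ≤ M.γ * ∑ s, (|d' s - d s| * kern M ρ' s s'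
      + |d s| * ∑ a, |ρ' s a - ρ s a| * M.P s a s') := by
    intro s'
    have h1 := isD_kern M hd' s'
    have h2 := isD_kern M hd s'
    have key : d' s' - d s' = M.γ * ∑ s, ((d' s - d s) * kern M ρ' s s'
        + d s * (kern M ρ' s s' - kern M ρ s s')) := by
      rw [h1, h2]
      have hh : ∑ s, ((d' s - d s) * kern M ρ' s s' + d s * (kern M ρ' s s' - kern M ρ s s'))
          = ∑ s, d' s * kern M ρ' s s' - ∑ s, d s * kern M ρ s s' := by
        rw [← Finset.sum_sub_distrib]
        exact Finset.sum_congr rfl fun s _ => by ring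
      rw [hh]; ring
    rw [key, abs_mul, abs_of_nonneg M.γ_pos.le]
    refine mul_le_mul_of_nonneg_left ?_ M.γ_pos.le
    refine (Finset.abs_sum_le_sum_abs _ _).trans (Finset.sum_le_sum fun s _ => ?_)
    refine (abs_add_le _ _).trans (add_le_add ?_ ?_)
    · rw [abs_mul, abs_of_nonneg (kern_nonneg M hρ'.1 s s')]
    · rw [abs_mul]
      refine mul_le_mul_of_nonneg_left ?_ (abs_nonneg _)
      unfold kern
      rw [← Finset.sum_sub_distrib]
      refine (Finset.abs_sum_le_sum_abs _ _).trans (Finset.sum_le_sum fun a _ => ?_)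
      rw [show ρ' s a * M.P s a s' - ρ s a * M.P s a s'
            = (ρ' s a - ρ s a) * M.P s a s' from by ring,
          abs_mul, abs_of_nonneg (M.P_nonneg s a s')]
  have total : ∑ s', |d' s' - d s'| ≤ M.γ * (∑ s, |d' s - d s|) + M.γ * B := by
    calc ∑ s', |d' s' - d s'|
        ≤ ∑ s', M.γ * ∑ s, (|d' s - d s| * kern M ρ' s s'
            + |d s| * ∑ a, |ρ' s a - ρ s a| * M.P s a s') :=
          Finset.sum_le_sum fun s' _ => step s'
      _ = M.γ * ∑ s, (|d' s - d s| + |d s| * ∑ a, |ρ' s a - ρ s a|) := by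
          rw [← Finset.mul_sum, Finset.sum_comm]
          congr 1
          refine Finset.sum_congr rfl fun s _ => ?_
          rw [Finset.sum_add_distrib, ← Finset.mul_sum, ← Finset.mul_sum,
              kern_sum M hρ'.2, mul_one]
          congr 2
          rw [Finset.sum_comm]
          refine Finset.sum_congr rfl fun a _ => ?_
          rw [← Finset.mul_sum, M.P_sum_one, mul_one]
      _ ≤ M.γ * (∑ s, (|d' s - d s| + |d s| * B)) := by
          refine mul_le_mul_of_nonneg_left (Finset.sum_le_sum fun s _ => ?_) M.γ_pos.le
          exact add_le_add le_rfl (mul_le_mul_of_nonneg_left (hB s) (abs_nonneg _))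
      _ = M.γ * (∑ s, |d' s - d s|) + M.γ * ((∑ s, |d s|) * B) := by
          rw [Finset.sum_add_distrib, mul_add, ← Finset.sum_mul]
      _ ≤ M.γ * (∑ s, |d' s - d s|) + M.γ * B := by
          have h1 := d_abs_sum_le_one M hρ hd
          nlinarith [mul_nonneg (sub_nonneg.mpr h1) hB0, M.γ_pos.le]
  rw [le_div_iff₀ hγ1]
  nlinarith [M.γ_pos]

lemma jret_eq (M : FiniteMDP S A) (π Q ρ : S → A → ℝ) (dρ : S → ℝ)
    (hQ : IsQ M π Q) (hd : IsD M ρ dρ) :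
    Jret M ρ dρ = (∑ s, dρ s * polAdv ρ π Q s)
      + (1 - M.γ) * ∑ a, π M.s0 a * Q M.s0 a := by
  set V : S → ℝ := fun s => ∑ a', π s a' * Q s a' with hV
  have hr : ∀ s a, M.r s a = Q s a - M.γ * ∑ s', M.P s a s' * V s' := by
    intro s a; have := hQ s a; rw [hV]; linarith
  have inner : ∀ s, ∑ a, ρ s a * M.r s a
      = (∑ a, ρ s a * Q s a) - M.γ * ∑ s', kern M ρ s s' * V s' := by
    intro s
    have swap : ∑ a, ρ s a * ∑ s', M.P s a s' * V s' = ∑ s', kern M ρ s s' * V s' := by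
      unfold kern
      simp_rw [Finset.mul_sum]
      rw [Finset.sum_comm]
      refine Finset.sum_congr rfl fun s' _ => ?_
      rw [Finset.sum_mul]
      exact Finset.sum_congr rfl fun a _ => by ring
    calc ∑ a, ρ s a * M.r s a
        = ∑ a, (ρ s a * Q s a - M.γ * (ρ s a * ∑ s', M.P s a s' * V s')) := by
          refine Finset.sum_congr rfl fun a _ => ?_
          rw [hr s a]; ring
      _ = (∑ a, ρ s a * Q s a) - M.γ * ∑ a, ρ s a * ∑ s', M.P s a s' * V s' := by
          rw [Finset.sum_sub_distrib, ← Finset.mul_sum]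
      _ = (∑ a, ρ s a * Q s a) - M.γ * ∑ s', kern M ρ s s' * V s' := by rw [swap]
  have swap2 : ∑ s, dρ s * ∑ s', kern M ρ s s' * V s'
      = ∑ s', (∑ s, dρ s * kern M ρ s s') * V s' := by
    simp_rw [Finset.mul_sum]
    rw [Finset.sum_comm]
    refine Finset.sum_congr rfl fun s' _ => ?_
    rw [Finset.sum_mul]
    exact Finset.sum_congr rfl fun s _ => by ring
  have hfix : ∀ s', M.γ * ∑ s, dρ s * kern M ρ s s'
      = dρ s' - (1 - M.γ) * (if s' = M.s0 then (1:ℝ) else 0) := by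
    intro s'; have := isD_kern M hd s'; linarith
  have second : M.γ * ∑ s, dρ s * ∑ s', kern M ρ s s' * V s'
      = (∑ s', dρ s' * V s') - (1 - M.γ) * V M.s0 := by
    rw [swap2, Finset.mul_sum]
    calc ∑ s', M.γ * ((∑ s, dρ s * kern M ρ s s') * V s')
        = ∑ s', (dρ s' - (1 - M.γ) * (if s' = M.s0 then (1:ℝ) else 0)) * V s' := by
          refine Finset.sum_congr rfl fun s' _ => ?_
          rw [← mul_assoc, hfix s']
      _ = (∑ s', dρ s' * V s')
            - (1 - M.γ) * ∑ s', (if s' = M.s0 then (1:ℝ) else 0) * V s' := by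
          rw [Finset.mul_sum, ← Finset.sum_sub_distrib]
          exact Finset.sum_congr rfl fun s' _ => by ring
      _ = (∑ s', dρ s' * V s') - (1 - M.γ) * V M.s0 := by
          congr 1
          congr 1
          simp only [ite_mul, one_mul, zero_mul, Finset.sum_ite_eq', Finset.mem_univ,
            if_true]
  have hpa : ∀ s, polAdv ρ π Q s = (∑ a, ρ s a * Q s a) - V s := by
    intro s
    unfold polAdv
    rw [hV]
    rw [← Finset.sum_sub_distrib]
    exact Finset.sum_congr rfl fun a _ => by ring
  calc Jret M ρ dρ
      = ∑ s, dρ s * ((∑ a, ρ s a * Q s a) - M.γ * ∑ s', kern M ρ s s' * V s') := by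
        unfold Jret
        exact Finset.sum_congr rfl fun s _ => by rw [inner s]
    _ = (∑ s, dρ s * ∑ a, ρ s a * Q s a)
          - M.γ * ∑ s, dρ s * ∑ s', kern M ρ s s' * V s' := by
        rw [Finset.mul_sum, ← Finset.sum_sub_distrib]
        exact Finset.sum_congr rfl fun s _ => by ring
    _ = (∑ s, dρ s * polAdv ρ π Q s) + (1 - M.γ) * V M.s0 := by
        rw [second]
        rw [show (∑ s, dρ s * polAdv ρ π Q s)
            = (∑ s, dρ s * ∑ a, ρ s a * Q s a) - ∑ s, dρ s * V s from by
          rw [← Finset.sum_sub_distrib]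
          exact Finset.sum_congr rfl fun s _ => by rw [hpa s]; ring]
        ring

lemma weighted_zero_sum_bound [Nonempty S] (e f : S → ℝ) (he : ∑ s, e s = 0) (Δ : ℝ)
    (hΔ : ∀ s t, |f s - f t| ≤ Δ) :
    |∑ s, e s * f s| ≤ (∑ s, |e s|) * (Δ / 2) := by
  obtain ⟨s1, -, h1⟩ := Finset.exists_max_image Finset.univ f Finset.univ_nonempty
  obtain ⟨s2, -, h2⟩ := Finset.exists_min_image Finset.univ f Finset.univ_nonempty
  set c : ℝ := (f s1 + f s2) / 2 with hc
  have hfc : ∀ s, |f s - c| ≤ Δ / 2 := by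
    intro s
    have ha := h1 s (Finset.mem_univ s)
    have hb := h2 s (Finset.mem_univ s)
    have hΔ12 := abs_le.mp (hΔ s1 s2)
    rw [abs_le]
    constructor <;> [skip; skip] <;> rw [hc] <;> linarith [hΔ12.1, hΔ12.2]
  have hswitch : ∑ s, e s * f s = ∑ s, e s * (f s - c) := by
    rw [show ∑ s, e s * (f s - c) = ∑ s, e s * f s - (∑ s, e s) * c from by
      rw [Finset.sum_mul, ← Finset.sum_sub_distrib]
      exact Finset.sum_congr rfl fun s _ => by ring]
    rw [he]; ring
  rw [hswitch]
  refine (Finset.abs_sum_le_sum_abs _ _).trans ?_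
  rw [Finset.sum_mul]
  refine Finset.sum_le_sum fun s _ => ?_
  rw [abs_mul]
  exact mul_le_mul_of_nonneg_left (hfc s) (abs_nonneg _)


/-- **Quadratic lower bound for interpolated policies** (Eq. (A.5)):
with `π' = ζ·π̃ + (1−ζ)·π`,
`J^{π'} − J^{π} ≥ ζ·A^{π̃}_{π,d^π} − (γζ²/(2(1−γ)²))·δ(π̃,π)·ΔA^{π̃}_π`. -/
theorem interpolated_policy_quadratic_lower_bound
    {S A : Type} [Fintype S] [Fintype A] [DecidableEq S] [Nonempty S] [Nonempty A]
    (M : FiniteMDP S A) (πt π Q : S → A → ℝ) (ζ : ℝ) (π' : S → A → ℝ) (d' d : S → ℝ)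
    (hπt : IsPolicy πt) (hπ : IsPolicy π)
    (hζ0 : 0 ≤ ζ) (hζ1 : ζ ≤ 1)
    (hmix : ∀ s a, π' s a = ζ * πt s a + (1 - ζ) * π s a)
    (hQ : IsQ M π Q) (hd' : IsD M π' d') (hd : IsD M π d) :
    Jret M π' d' - Jret M π d ≥
      ζ * expPolAdv πt π Q d
        - (M.γ * ζ ^ 2 / (2 * (1 - M.γ) ^ 2)) * polDist πt π * advRange πt π Q := by
  have hγ1 : (0:ℝ) < 1 - M.γ := by linarith [M.γ_lt_one]
  set δ := polDist πt π with hδdef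
  set Δ := advRange πt π Q with hΔdef
  set Af := polAdv πt π Q with hAfdef
  -- π' is a policy
  have hπ' : IsPolicy π' := by
    constructor
    · intro s a
      rw [hmix s a]
      exact add_nonneg (mul_nonneg hζ0 (hπt.1 s a))
        (mul_nonneg (by linarith) (hπ.1 s a))
    · intro s
      simp only [hmix]
      rw [Finset.sum_add_distrib, ← Finset.mul_sum, ← Finset.mul_sum, hπt.2, hπ.2]
      ring
  -- bounds via suprema
  have hbddδ : BddAbove (Set.range fun s : S => ∑ a, |πt s a - π s a|) :=
    Set.Finite.bddAbove (Set.finite_range _)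
  have hδle : ∀ s, ∑ a, |πt s a - π s a| ≤ δ := fun s => le_ciSup hbddδ s
  have hδ0 : 0 ≤ δ := by
    have s := Classical.arbitrary S
    exact le_trans (Finset.sum_nonneg fun a _ => abs_nonneg _) (hδle s)
  have hbddΔ : BddAbove (Set.range fun p : S × S => |Af p.1 - Af p.2|) :=
    Set.Finite.bddAbove (Set.finite_range _)
  have hΔle : ∀ s t, |Af s - Af t| ≤ Δ := fun s t => le_ciSup hbddΔ ((s, t) : S × S)
  have hΔ0 : 0 ≤ Δ := by
    have s := Classical.arbitrary S
    have := hΔle s s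
    simp at this
    exact this
  -- mixture distance bound
  have hB : ∀ s, ∑ a, |π' s a - π s a| ≤ ζ * δ := by
    intro s
    have : ∀ a, |π' s a - π s a| = ζ * |πt s a - π s a| := by
      intro a
      rw [show π' s a - π s a = ζ * (πt s a - π s a) from by rw [hmix s a]; ring,
        abs_mul, abs_of_nonneg hζ0]
    rw [Finset.sum_congr rfl fun a _ => this a, ← Finset.mul_sum]
    exact mul_le_mul_of_nonneg_left (hδle s) hζ0
  have he1 : ∑ s, |d' s - d s| ≤ M.γ * (ζ * δ) / (1 - M.γ) :=
    e_abs_sum_le M hπ' hπ hd' hd (ζ * δ) (mul_nonneg hζ0 hδ0) hB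
  -- zero-sum of the difference
  have hsum' : ∑ s, d' s = 1 := d_sum_one M hπ'.2 hd'
  have hsum : ∑ s, d s = 1 := d_sum_one M hπ.2 hd
  have he0 : ∑ s, (d' s - d s) = 0 := by
    rw [Finset.sum_sub_distrib, hsum', hsum]; ring
  -- performance difference
  have hJ' := jret_eq M π Q π' d' hQ hd'
  have hJ := jret_eq M π Q π d hQ hd
  have hπzero : ∀ s, polAdv π π Q s = 0 := by
    intro s; unfold polAdv; simp
  have hJeq : Jret M π d = (1 - M.γ) * ∑ a, π M.s0 a * Q M.s0 a := by
    rw [hJ]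
    simp [hπzero]
  have hA' : ∀ s, polAdv π' π Q s = ζ * Af s := by
    intro s
    rw [hAfdef]
    unfold polAdv
    rw [Finset.mul_sum]
    refine Finset.sum_congr rfl fun a _ => ?_
    rw [hmix s a]; ring
  have hdiff : Jret M π' d' - Jret M π d = ζ * ∑ s, d' s * Af s := by
    rw [hJ', hJeq]
    have h9 : ∑ s, d' s * polAdv π' π Q s = ζ * ∑ s, d' s * Af s := by
      rw [Finset.mul_sum]
      exact Finset.sum_congr rfl fun s _ => by rw [hA' s]; ring
    rw [h9]; ring
  have hsplit : ∑ s, d' s * Af s = (∑ s, d s * Af s) + ∑ s, (d' s - d s) * Af s := by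
    rw [← Finset.sum_add_distrib]
    exact Finset.sum_congr rfl fun s _ => by ring
  -- bound the perturbation term
  have hE : |∑ s, (d' s - d s) * Af s| ≤ (M.γ * (ζ * δ) / (1 - M.γ)) * (Δ / 2) := by
    refine (weighted_zero_sum_bound _ _ he0 Δ hΔle).trans ?_
    exact mul_le_mul_of_nonneg_right he1 (by linarith)
  have hEP : ζ * ∑ s, (d' s - d s) * Af s ≥ -(ζ * ((M.γ * (ζ * δ) / (1 - M.γ)) * (Δ / 2))) := by
    have h1 : -(∑ s, (d' s - d s) * Af s) ≤ (M.γ * (ζ * δ) / (1 - M.γ)) * (Δ / 2) :=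
      (neg_le_abs _).trans hE
    nlinarith [mul_le_mul_of_nonneg_left h1 hζ0]
  -- arithmetic comparison of constants
  have harith : ζ * ((M.γ * (ζ * δ) / (1 - M.γ)) * (Δ / 2))
      ≤ M.γ * ζ ^ 2 / (2 * (1 - M.γ) ^ 2) * δ * Δ := by
    have hne : (1:ℝ) - M.γ ≠ 0 := ne_of_gt hγ1
    have e1 : ζ * ((M.γ * (ζ * δ) / (1 - M.γ)) * (Δ / 2))
        = (M.γ * ζ ^ 2 * δ * Δ) / (2 * (1 - M.γ)) := by
      field_simp
    have e2 : M.γ * ζ ^ 2 / (2 * (1 - M.γ) ^ 2) * δ * Δ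
        = (M.γ * ζ ^ 2 * δ * Δ) / (2 * (1 - M.γ) ^ 2) := by ring
    rw [e1, e2]
    rw [div_le_div_iff₀ (by linarith) (by positivity)]
    have hN : 0 ≤ M.γ * ζ ^ 2 * δ * Δ :=
      mul_nonneg (mul_nonneg (mul_nonneg M.γ_pos.le (sq_nonneg ζ)) hδ0) hΔ0
    nlinarith [mul_nonneg (mul_nonneg hN hγ1.le) M.γ_pos.le]
  -- assemble
  have hexp : expPolAdv πt π Q d = ∑ s, d s * Af s := rfl
  rw [hdiff, hsplit, hexp]
  have : ζ * ((∑ s, d s * Af s) + ∑ s, (d' s - d s) * Af s)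
      = ζ * (∑ s, d s * Af s) + ζ * ∑ s, (d' s - d s) * Af s := by ring
  rw [this]
  linarith [hEP, harith]
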